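/- arXiv:1405.5069 — 2 statements merged into one kernel-verified Lean document; each statement's English description precedes it below -/
import Mathlib

section
/- A compact invariant set Λ on which both bundles of a dominated splitting are uniformly contracted/expanded along the orbit—that is, lim_{t→∞} ‖P_t(x)|_{N^s_x}‖ = 0 and lim_{t→∞} ‖P_{−t}(x)|_{N^u_x}‖ = 0 pointwise for all x ∈ Λ with the splitting dominated—admits uniform exponential estimates: there exist K, λ > 0 with ‖P_t(x)|_{N^s_x}‖ ≤ K e^{−λt} and ‖P_{−t}(x)|_{N^u_x}‖ ≤ K e^{−λt} for all x ∈ Λ, t ≥ 0. -/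
open Set Filter

lemma aux_exp_bound {M : Type*} [MetricSpace M]
    (Λ : Set M) (hΛcomp : IsCompact Λ)
    (ψ : ℝ → M → M) (hψ : ∀ t : ℝ, ∀ y ∈ Λ, ψ t y ∈ Λ)
    (c : ℝ → M → ℝ)
    (hccont : Continuous fun p : ℝ × M => c p.1 p.2)
    (hpos : ∀ t ≥ (0 : ℝ), ∀ x ∈ Λ, 0 < c t x)
    (hc0 : ∀ x ∈ Λ, c 0 x = 1)
    (hcocycle : ∀ s ≥ (0 : ℝ), ∀ t ≥ (0 : ℝ), ∀ x ∈ Λ,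
      c (s + t) x ≤ c s (ψ t x) * c t x)
    (hlim : ∀ x ∈ Λ, Tendsto (fun t => c t x) atTop (nhds 0)) :
    ∃ K lam : ℝ, 0 < K ∧ 0 < lam ∧ ∀ x ∈ Λ, ∀ t ≥ (0 : ℝ),
      c t x ≤ K * Real.exp (-lam * t) := by
  -- for each x ∈ Λ, a time τ ≥ 1 with c τ x < 1/2
  have hexists : ∀ x ∈ Λ, ∃ τ : ℝ, 1 ≤ τ ∧ c τ x < 1/2 := by
    intro x hx
    have h1 : ∀ᶠ t in atTop, c t x < 1/2 := by
      have := (hlim x hx).eventually (eventually_lt_nhds (by norm_num : (0:ℝ) < 1/2))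
      exact this
    have h2 : ∀ᶠ t in atTop, (1:ℝ) ≤ t := eventually_ge_atTop 1
    obtain ⟨τ, hτ1, hτ2⟩ := (h2.and h1).exists
    exact ⟨τ, hτ1, hτ2⟩
  classical
  set τ : M → ℝ := fun x => if h : x ∈ Λ then (hexists x h).choose else 1 with hτdef
  have hτ1 : ∀ x ∈ Λ, 1 ≤ τ x := by
    intro x hx; simp only [hτdef, dif_pos hx]; exact (hexists x hx).choose_spec.1
  have hτc : ∀ x ∈ Λ, c (τ x) x < 1/2 := by
    intro x hx; simp only [hτdef, dif_pos hx]; exact (hexists x hx).choose_spec.2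
  -- open cover
  have hUopen : ∀ x : M, IsOpen {y | c (τ x) y < 1/2} := by
    intro x
    have : Continuous fun y => c (τ x) y :=
      hccont.comp (continuous_const.prodMk continuous_id)
    exact isOpen_lt this continuous_const
  have hcover : Λ ⊆ ⋃ x ∈ Λ, {y | c (τ x) y < 1/2} := by
    intro y hy
    exact mem_iUnion₂.2 ⟨y, hy, hτc y hy⟩
  obtain ⟨s, hsΛ, hsfin, hscov⟩ :=
    hΛcomp.elim_finite_subcover_image (fun x _ => hUopen x) hcover
  -- maximal time
  set T₀ : ℝ := 1 + ∑ i ∈ hsfin.toFinset, τ i with hT₀def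
  have hτnonneg : ∀ i ∈ hsfin.toFinset, 0 ≤ τ i := by
    intro i hi
    exact le_trans zero_le_one (hτ1 i (hsΛ (hsfin.mem_toFinset.1 hi)))
  have hT₀1 : 1 ≤ T₀ := by
    have : 0 ≤ ∑ i ∈ hsfin.toFinset, τ i := Finset.sum_nonneg hτnonneg
    linarith [this]
  have hT₀pos : 0 < T₀ := lt_of_lt_of_le one_pos hT₀1
  have hτleT₀ : ∀ i ∈ s, τ i ≤ T₀ := by
    intro i hi
    have : τ i ≤ ∑ j ∈ hsfin.toFinset, τ j :=
      Finset.single_le_sum hτnonneg (hsfin.mem_toFinset.2 hi)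
    linarith
  -- key step: every point has a contracting time in [1, T₀]
  have hkey : ∀ y ∈ Λ, ∃ τ' : ℝ, 1 ≤ τ' ∧ τ' ≤ T₀ ∧ c τ' y ≤ 1/2 := by
    intro y hy
    obtain ⟨i, hi, hyi⟩ := mem_iUnion₂.1 (hscov hy)
    exact ⟨τ i, hτ1 i (hsΛ hi), hτleT₀ i hi, le_of_lt hyi⟩
  -- uniform bound on [0, T₀] × Λ
  have hKcomp : IsCompact ((Icc (0:ℝ) T₀) ×ˢ Λ) := (isCompact_Icc.prod hΛcomp)
  obtain ⟨C0, hC0⟩ := (hKcomp.image hccont).bddAbove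
  set C : ℝ := max 1 C0 with hCdef
  have hC1 : 1 ≤ C := le_max_left _ _
  have hCpos : 0 < C := lt_of_lt_of_le one_pos hC1
  have hCbound : ∀ t : ℝ, 0 ≤ t → t ≤ T₀ → ∀ x ∈ Λ, c t x ≤ C := by
    intro t ht1 ht2 x hx
    have : c t x ∈ (fun p : ℝ × M => c p.1 p.2) '' ((Icc (0:ℝ) T₀) ×ˢ Λ) :=
      ⟨(t, x), ⟨⟨ht1, ht2⟩, hx⟩, rfl⟩
    exact le_trans (hC0 this) (le_max_right _ _)
  -- claim A: c t x ≤ C for all t ≥ 0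
  have claimA : ∀ n : ℕ, ∀ x ∈ Λ, ∀ t : ℝ, 0 ≤ t → t ≤ n → c t x ≤ C := by
    intro n
    induction n with
    | zero =>
      intro x hx t ht1 ht2
      have : t = 0 := le_antisymm (by exact_mod_cast ht2) ht1
      rw [this, hc0 x hx]; exact hC1
    | succ n ih =>
      intro x hx t ht1 ht2
      by_cases h : t ≤ T₀
      · exact hCbound t ht1 h x hx
      · push_neg at h
        obtain ⟨τ', hτ'1, hτ'T₀, hτ'c⟩ := hkey x hx
        have hτ'le : τ' ≤ t := le_trans hτ'T₀ (le_of_lt h)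
        have hts : 0 ≤ t - τ' := by linarith
        have htsn : t - τ' ≤ n := by
          push_cast at ht2 ⊢; linarith
        have hstep := hcocycle (t - τ') hts τ' (by linarith) x hx
        rw [sub_add_cancel] at hstep
        have hψx : ψ τ' x ∈ Λ := hψ τ' x hx
        have hA : c (t - τ') (ψ τ' x) ≤ C := ih (ψ τ' x) hψx (t - τ') hts htsn
        have hApos : 0 ≤ c (t - τ') (ψ τ' x) := le_of_lt (hpos _ hts _ hψx)
        have hBpos : 0 ≤ c τ' x := le_of_lt (hpos _ (by linarith) _ hx)
        calc c t x ≤ c (t - τ') (ψ τ' x) * c τ' x := hstep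
          _ ≤ C * (1/2) := mul_le_mul hA hτ'c hBpos (le_of_lt hCpos)
          _ ≤ C := by linarith
  have claimA' : ∀ t : ℝ, 0 ≤ t → ∀ x ∈ Λ, c t x ≤ C := by
    intro t ht x hx
    exact claimA ⌈t⌉₊ x hx t ht (Nat.le_ceil t)
  -- claim B: exponential decay in steps of T₀
  have claimB : ∀ n : ℕ, ∀ x ∈ Λ, ∀ t : ℝ, (n : ℝ) * T₀ ≤ t → c t x ≤ C * (1/2)^n := by
    intro n
    induction n with
    | zero =>
      intro x hx t ht
      simp only [Nat.cast_zero, zero_mul] at ht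
      simpa using claimA' t ht x hx
    | succ n ih =>
      intro x hx t ht
      obtain ⟨τ', hτ'1, hτ'T₀, hτ'c⟩ := hkey x hx
      have hcast : ((n : ℝ) + 1) * T₀ ≤ t := by push_cast at ht; linarith
      have hts : (n : ℝ) * T₀ ≤ t - τ' := by nlinarith
      have hts0 : 0 ≤ t - τ' := le_trans (by positivity) hts
      have hstep := hcocycle (t - τ') hts0 τ' (by linarith) x hx
      rw [sub_add_cancel] at hstep
      have hψx : ψ τ' x ∈ Λ := hψ τ' x hx
      have hA : c (t - τ') (ψ τ' x) ≤ C * (1/2)^n := ih (ψ τ' x) hψx (t - τ') hts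
      have hApos : 0 ≤ c (t - τ') (ψ τ' x) := le_of_lt (hpos _ hts0 _ hψx)
      have hBpos : 0 ≤ c τ' x := le_of_lt (hpos _ (by linarith) _ hx)
      calc c t x ≤ c (t - τ') (ψ τ' x) * c τ' x := hstep
        _ ≤ (C * (1/2)^n) * (1/2) :=
          mul_le_mul hA hτ'c hBpos (by positivity)
        _ = C * (1/2)^(n+1) := by ring
  -- conclude
  refine ⟨2 * C, Real.log 2 / T₀, by positivity,
    div_pos (Real.log_pos one_lt_two) hT₀pos, ?_⟩
  intro x hx t ht
  set lam : ℝ := Real.log 2 / T₀ with hlamdef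
  set n : ℕ := ⌊t / T₀⌋₊ with hn
  have hnle : (n : ℝ) * T₀ ≤ t := by
    rw [← le_div_iff₀ hT₀pos]
    exact Nat.floor_le (div_nonneg ht (le_of_lt hT₀pos))
  have hlt : t / T₀ < (n : ℝ) + 1 := Nat.lt_floor_add_one _
  have hB := claimB n x hx t hnle
  have hpow : ((1:ℝ)/2)^n = Real.exp (-(n : ℝ) * Real.log 2) := by
    rw [neg_mul, Real.exp_neg, Real.exp_nat_mul, Real.exp_log two_pos]
    rw [one_div, inv_pow]
  have hexp : Real.exp (-(n : ℝ) * Real.log 2) ≤ 2 * Real.exp (-lam * t) := by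
    have hlog : 0 < Real.log 2 := Real.log_pos one_lt_two
    have hkey2 : -(n : ℝ) * Real.log 2 ≤ Real.log 2 + (-lam * t) := by
      have heq : -lam * t = -(t / T₀) * Real.log 2 := by rw [hlamdef]; ring
      have hprod : 0 < ((n : ℝ) + 1 - t / T₀) * Real.log 2 :=
        mul_pos (by linarith) hlog
      rw [heq]; nlinarith [hprod]
    calc Real.exp (-(n : ℝ) * Real.log 2) ≤ Real.exp (Real.log 2 + (-lam * t)) :=
          Real.exp_le_exp.2 hkey2
      _ = 2 * Real.exp (-lam * t) := by rw [Real.exp_add, Real.exp_log two_pos]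
  calc c t x ≤ C * (1/2)^n := hB
    _ = C * Real.exp (-(n:ℝ) * Real.log 2) := by rw [hpow]
    _ ≤ C * (2 * Real.exp (-lam * t)) := by
        exact mul_le_mul_of_nonneg_left hexp (le_of_lt hCpos)
    _ = 2 * C * Real.exp (-lam * t) := by ring

/-- Pointwise contraction of both bundles of a dominated splitting over a compact
invariant set yields uniform exponential estimates. Here `a t x` abstracts the
norm `‖P_t(x)|_{N^s_x}‖` and `b t x` the norm `‖P_{-t}(x)|_{N^u_x}‖` of the
restrictions of the linear Poincaré cocycle to the bundles of the splitting. -/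
theorem uniform_exponential_bounds_of_pointwise_contraction
    {M : Type*} [MetricSpace M] [CompactSpace M]
    (φ : ℝ → M → M)
    (hcont : Continuous fun p : ℝ × M => φ p.1 p.2)
    (h0 : ∀ x, φ 0 x = x)
    (hadd : ∀ s t x, φ (s + t) x = φ s (φ t x))
    (Λ : Set M) (hΛcomp : IsCompact Λ) (hΛinv : ∀ t : ℝ, φ t '' Λ = Λ)
    (a b : ℝ → M → ℝ)
    (hacont : Continuous fun p : ℝ × M => a p.1 p.2)
    (hbcont : Continuous fun p : ℝ × M => b p.1 p.2)
    (hapos : ∀ t ≥ (0 : ℝ), ∀ x ∈ Λ, 0 < a t x)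
    (hbpos : ∀ t ≥ (0 : ℝ), ∀ x ∈ Λ, 0 < b t x)
    (ha0 : ∀ x ∈ Λ, a 0 x = 1) (hb0 : ∀ x ∈ Λ, b 0 x = 1)
    -- submultiplicative cocycle property of the restricted norms
    (hacocycle : ∀ s ≥ (0 : ℝ), ∀ t ≥ (0 : ℝ), ∀ x ∈ Λ,
      a (s + t) x ≤ a s (φ t x) * a t x)
    (hbcocycle : ∀ s ≥ (0 : ℝ), ∀ t ≥ (0 : ℝ), ∀ x ∈ Λ,
      b (s + t) x ≤ b s (φ (-t) x) * b t x)
    -- domination: ‖P_T(x)|_{N^s_x}‖ · ‖P_{-T}(φ_T(x))|_{N^u_{φ_T(x)}}‖ ≤ 1/2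
    (T : ℝ) (hT : 0 < T)
    (hdom : ∀ x ∈ Λ, a T x * b T (φ T x) ≤ 1 / 2)
    -- pointwise contraction along the orbit
    (halim : ∀ x ∈ Λ, Tendsto (fun t => a t x) atTop (nhds 0))
    (hblim : ∀ x ∈ Λ, Tendsto (fun t => b t x) atTop (nhds 0)) :
    ∃ K lam : ℝ, 0 < K ∧ 0 < lam ∧ ∀ x ∈ Λ, ∀ t ≥ (0 : ℝ),
      a t x ≤ K * Real.exp (-lam * t) ∧ b t x ≤ K * Real.exp (-lam * t) := by
  have hainv : ∀ t : ℝ, ∀ y ∈ Λ, φ t y ∈ Λ := by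
    intro t y hy
    rw [← hΛinv t]; exact ⟨y, hy, rfl⟩
  have hbinv : ∀ t : ℝ, ∀ y ∈ Λ, φ (-t) y ∈ Λ := fun t y hy => hainv (-t) y hy
  obtain ⟨K₁, lam₁, hK₁, hlam₁, hbound₁⟩ :=
    aux_exp_bound Λ hΛcomp φ hainv a hacont hapos ha0 hacocycle halim
  obtain ⟨K₂, lam₂, hK₂, hlam₂, hbound₂⟩ :=
    aux_exp_bound Λ hΛcomp (fun t x => φ (-t) x) hbinv b hbcont hbpos hb0
      hbcocycle hblim
  refine ⟨K₁ + K₂, min lam₁ lam₂, by positivity, lt_min hlam₁ hlam₂, ?_⟩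
  intro x hx t ht
  have hexp1 : Real.exp (-lam₁ * t) ≤ Real.exp (-(min lam₁ lam₂) * t) := by
    apply Real.exp_le_exp.2
    have : min lam₁ lam₂ ≤ lam₁ := min_le_left _ _
    nlinarith
  have hexp2 : Real.exp (-lam₂ * t) ≤ Real.exp (-(min lam₁ lam₂) * t) := by
    apply Real.exp_le_exp.2
    have : min lam₁ lam₂ ≤ lam₂ := min_le_right _ _
    nlinarith
  have hepos : 0 < Real.exp (-(min lam₁ lam₂) * t) := Real.exp_pos _
  constructor
  · calc a t x ≤ K₁ * Real.exp (-lam₁ * t) := hbound₁ x hx t ht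
      _ ≤ K₁ * Real.exp (-(min lam₁ lam₂) * t) :=
          mul_le_mul_of_nonneg_left hexp1 (le_of_lt hK₁)
      _ ≤ (K₁ + K₂) * Real.exp (-(min lam₁ lam₂) * t) := by nlinarith
  · calc b t x ≤ K₂ * Real.exp (-lam₂ * t) := hbound₂ x hx t ht
      _ ≤ K₂ * Real.exp (-(min lam₁ lam₂) * t) :=
          mul_le_mul_of_nonneg_left hexp2 (le_of_lt hK₂)
      _ ≤ (K₁ + K₂) * Real.exp (-(min lam₁ lam₂) * t) := by nlinarith
end

section
/- If Λ⁺ is Lyapunov stable for the flow φ and Λ⁻ is Lyapunov stable for the reversed flow, then H = Λ⁺ ∩ Λ⁻ satisfies: for every x with ω(x) ∩ H ≠ ∅ and α(x) well-defined, ω(x) ⊆ Λ⁺; consequently W^s_w(H) ⊆ W^s(Λ⁺). -/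
open Set Filter

/-- The omega-limit set of a point under a flow `φ`. -/
def omegaSet {M : Type*} [MetricSpace M] (φ : ℝ → M → M) (x : M) : Set M :=
  {y | ∃ tk : ℕ → ℝ, Tendsto tk atTop atTop ∧
    Tendsto (fun n => φ (tk n) x) atTop (nhds y)}

/-- A set is invariant under the flow `φ`. -/
def FlowInvariant {M : Type*} [MetricSpace M] (φ : ℝ → M → M) (Λ : Set M) : Prop :=
  ∀ t : ℝ, φ t '' Λ = Λ

/-- Lyapunov stability of a set for the flow `φ`. -/
def LyapunovStable {M : Type*} [MetricSpace M] (φ : ℝ → M → M) (Λ : Set M) : Prop :=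
  ∀ U : Set M, IsOpen U → Λ ⊆ U →
    ∃ V : Set M, IsOpen V ∧ Λ ⊆ V ∧ V ⊆ U ∧ ∀ t ≥ (0 : ℝ), φ t '' V ⊆ U

/-- If `Λ⁺` is Lyapunov stable for `φ` and `Λ⁻` is Lyapunov stable for the
reversed flow, then the weak basin of `H = Λ⁺ ∩ Λ⁻` is contained in the basin
of `Λ⁺`. -/
theorem weak_basin_subset_basin_of_intersection
    {M : Type*} [MetricSpace M] [CompactSpace M]
    (φ : ℝ → M → M)
    (hcont : Continuous fun p : ℝ × M => φ p.1 p.2)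
    (h0 : ∀ x, φ 0 x = x)
    (hadd : ∀ s t x, φ (s + t) x = φ s (φ t x))
    (Λp Λm : Set M)
    (hpcomp : IsCompact Λp) (hpinv : FlowInvariant φ Λp)
    (hmcomp : IsCompact Λm) (hminv : FlowInvariant φ Λm)
    (hpstable : LyapunovStable φ Λp)
    (hmstable : LyapunovStable (fun t x => φ (-t) x) Λm) :
    {x : M | (omegaSet φ x ∩ (Λp ∩ Λm)).Nonempty} ⊆
      {x : M | omegaSet φ x ⊆ Λp} := by
  rintro x ⟨y, hyω, hyp, -⟩ z hz
  by_contra hzp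
  have hne : Λp.Nonempty := ⟨y, hyp⟩
  have hd : 0 < Metric.infDist z Λp :=
    (hpcomp.isClosed.notMem_iff_infDist_pos hne).1 hzp
  set δ := Metric.infDist z Λp / 2 with hδ
  have hδpos : 0 < δ := by positivity
  obtain ⟨V, hVopen, hΛV, hVU, hVflow⟩ :=
    hpstable (Metric.thickening δ Λp) Metric.isOpen_thickening
      (Metric.self_subset_thickening hδpos Λp)
  obtain ⟨tk, htk, hconv⟩ := hyω
  have h1 : ∀ᶠ n in atTop, φ (tk n) x ∈ V :=
    hconv.eventually (hVopen.mem_nhds (hΛV hyp))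
  have h2 : ∀ᶠ n in atTop, (0 : ℝ) ≤ tk n := htk.eventually_ge_atTop 0
  obtain ⟨n, hnV, hn0⟩ := (h1.and h2).exists
  obtain ⟨sk, hsk, hsconv⟩ := hz
  have hmemU : ∀ᶠ m in atTop, φ (sk m) x ∈ Metric.thickening δ Λp := by
    filter_upwards [hsk.eventually_ge_atTop (tk n)] with m hm
    have heq : φ (sk m) x = φ (sk m - tk n) (φ (tk n) x) := by
      rw [← hadd]; ring_nf
    rw [heq]
    exact hVflow _ (by linarith) ⟨φ (tk n) x, hnV, rfl⟩
  have hzcl : z ∈ closure (Metric.thickening δ Λp) :=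
    mem_closure_of_tendsto hsconv hmemU
  have hle : Metric.infDist z Λp ≤ δ := by
    have hcl : IsClosed {w : M | Metric.infDist w Λp ≤ δ} :=
      isClosed_le (Metric.continuous_infDist_pt Λp) continuous_const
    exact hcl.closure_subset_iff.2
      (fun w hw => le_of_lt ((Metric.mem_thickening_iff_infDist_lt hne).1 hw)) hzcl
  linarith
end
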